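/- arXiv:2201.01522 — 2 statements merged into one kernel-verified Lean document; each statement's English description precedes it below -/
import Mathlib

section
/- Let H = [[h₁,h₃],[h₃,h₂]] be a Hamiltonian on (0,∞) and set m_j(t) = ∫₀ᵗ h_j(s) ds for j = 1,2,3. Assume m₁(t) > 0 and m₂(t) > 0 for every t > 0 (i.e. neither h₁ nor h₂ vanishes a.e. on any neighbourhood of 0). If m₁ is regularly varying at 0 with index ρ₁ ∈ (0,∞) and m₂ is rapidly varying at 0 (index ∞), then lim_{t→0⁺} m₃(t)/√(m₁(t)·m₂(t)) = 0. -/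
open MeasureTheory Filter Set Topology Real

noncomputable section

/-- A Hamiltonian on `(0,∞)`: a measurable, locally integrable, a.e. symmetric positive
semidefinite `2×2`-matrix-valued function with a.e. positive trace, whose trace is not
integrable at `∞` (i.e. `∫₀^∞ tr H = ∞`). -/
def IsHamiltonian (H : ℝ → Matrix (Fin 2) (Fin 2) ℝ) : Prop :=
  (∀ i j : Fin 2, Measurable fun t => H t i j) ∧
  (∀ x > (0:ℝ), ∀ i j : Fin 2, IntegrableOn (fun t => H t i j) (Ioc 0 x)) ∧
  (∀ᵐ t : ℝ, 0 < t → (H t).PosSemidef ∧ 0 < (H t).trace) ∧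
  ¬ IntegrableOn (fun t => (H t).trace) (Ioi 0)

/-- `f : (0,∞) → (0,∞)` is regularly varying at `0` with index `ρ`. -/
def RegVaryAt0 (f : ℝ → ℝ) (ρ : ℝ) : Prop :=
  ∀ l : ℝ, 0 < l →
    Tendsto (fun t => f (l * t) / f t) (𝓝[>] (0:ℝ)) (𝓝 (l ^ ρ))

/-- `f : (0,∞) → (0,∞)` is rapidly varying at `0` (index `∞`). -/
def RapidVaryAt0 (f : ℝ → ℝ) : Prop :=
  (∀ l : ℝ, l ∈ Ioo (0:ℝ) 1 →
      Tendsto (fun t => f (l * t) / f t) (𝓝[>] (0:ℝ)) (𝓝 0)) ∧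
  (∀ l : ℝ, 1 < l →
      Tendsto (fun t => f (l * t) / f t) (𝓝[>] (0:ℝ)) atTop)

/-- AM-GM: `√(xy) ≤ (x+y)/2` for nonnegative reals. -/
lemma my_sqrt_mul_le_half_add {x y : ℝ} (hx : 0 ≤ x) (hy : 0 ≤ y) :
    Real.sqrt (x * y) ≤ (x + y) / 2 := by
  have h1 : x * y ≤ ((x + y) / 2) ^ 2 := by nlinarith [sq_nonneg (x - y)]
  calc Real.sqrt (x * y) ≤ Real.sqrt (((x + y) / 2) ^ 2) := Real.sqrt_le_sqrt h1
    _ = (x + y) / 2 := Real.sqrt_sq (by positivity)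

/-- Cauchy–Schwarz for integrals of nonnegative functions. -/
lemma my_cs_integral {μ : Measure ℝ} {f g : ℝ → ℝ}
    (hf : MeasureTheory.Integrable f μ) (hg : MeasureTheory.Integrable g μ)
    (hf0 : 0 ≤ᵐ[μ] f) (hg0 : 0 ≤ᵐ[μ] g) :
    (∫ x, Real.sqrt (f x * g x) ∂μ) ≤
      Real.sqrt ((∫ x, f x ∂μ) * (∫ x, g x ∂μ)) := by
  set A := ∫ x, f x ∂μ with hA_def
  set B := ∫ x, g x ∂μ with hB_def
  have hA : 0 ≤ A := integral_nonneg_of_ae hf0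
  have hB : 0 ≤ B := integral_nonneg_of_ae hg0
  have hmeas : AEStronglyMeasurable (fun x => Real.sqrt (f x * g x)) μ :=
    (Real.continuous_sqrt.comp_aestronglyMeasurable
      (hf.aestronglyMeasurable.mul hg.aestronglyMeasurable))
  have hint : MeasureTheory.Integrable (fun x => Real.sqrt (f x * g x)) μ := by
    refine MeasureTheory.Integrable.mono' ((hf.add hg).div_const 2) hmeas ?_
    filter_upwards [hf0, hg0] with x hfx hgx
    rw [Real.norm_eq_abs, abs_of_nonneg (Real.sqrt_nonneg _)]
    exact my_sqrt_mul_le_half_add hfx hgx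
  have key : ∀ c : ℝ, 0 < c →
      (∫ x, Real.sqrt (f x * g x) ∂μ) ≤ (c * A + B / c) / 2 := by
    intro c hc
    have h1 : (∫ x, Real.sqrt (f x * g x) ∂μ) ≤
        ∫ x, (c * f x + g x / c) / 2 ∂μ := by
      refine integral_mono_ae hint (((hf.const_mul c).add (hg.div_const c)).div_const 2) ?_
      filter_upwards [hf0, hg0] with x hfx hgx
      have hrw : f x * g x = (c * f x) * (g x / c) := by field_simp
      rw [hrw]
      exact my_sqrt_mul_le_half_add (mul_nonneg hc.le hfx) (div_nonneg hgx hc.le)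
    have h2 : (∫ x, (c * f x + g x / c) / 2 ∂μ) = (c * A + B / c) / 2 := by
      rw [integral_div, integral_add (hf.const_mul c) (hg.div_const c),
        integral_const_mul, integral_div]
    linarith
  rw [Real.sqrt_mul hA]
  set sa := Real.sqrt A with hsa_def
  set sb := Real.sqrt B with hsb_def
  have hsa : 0 ≤ sa := Real.sqrt_nonneg _
  have hsb : 0 ≤ sb := Real.sqrt_nonneg _
  have hsa2 : sa ^ 2 = A := Real.sq_sqrt hA
  have hsb2 : sb ^ 2 = B := Real.sq_sqrt hB
  refine le_of_forall_pos_le_add ?_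
  intro δ hδ
  set ε := δ / (sa + sb + 1) with hε_def
  have hεpos : 0 < ε := by positivity
  have hεs : ε * (sa + sb + 1) = δ := div_mul_cancel₀ _ (by positivity)
  set c := (sb + ε) / (sa + ε) with hc_def
  have hc : 0 < c := div_pos (by positivity) (by positivity)
  have h1 : c * A ≤ sa * (sb + ε) := by
    rw [hc_def, div_mul_eq_mul_div, div_le_iff₀ (by positivity)]
    nlinarith [hsa2, mul_nonneg (mul_nonneg hsa (add_nonneg hsb hεpos.le)) hεpos.le]
  have h2 : B / c ≤ sb * (sa + ε) := by
    have hrw : B / c = B * (sa + ε) / (sb + ε) := by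
      rw [hc_def]; field_simp
    rw [hrw, div_le_iff₀ (by positivity)]
    nlinarith [hsb2, mul_nonneg (mul_nonneg hsb (add_nonneg hsa hεpos.le)) hεpos.le]
  have := key c hc
  nlinarith

/-- For a positive semidefinite real `2×2` matrix, the off-diagonal entry is dominated
by the geometric mean of the diagonal. -/
lemma my_psd_entry {M : Matrix (Fin 2) (Fin 2) ℝ} (hM : M.PosSemidef) :
    0 ≤ M 0 0 ∧ 0 ≤ M 1 1 ∧ |M 0 1| ≤ Real.sqrt (M 0 0 * M 1 1) := by
  have hsym : M 1 0 = M 0 1 := by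
    have := hM.1.apply 0 1
    simpa using this
  have key : ∀ u v : ℝ, 0 ≤ M 0 0 * u ^ 2 + 2 * M 0 1 * u * v + M 1 1 * v ^ 2 := by
    intro u v
    have h := hM.dotProduct_mulVec_nonneg ![u, v]
    simp only [dotProduct, Matrix.mulVec, Fin.sum_univ_two, Matrix.cons_val_zero,
      Matrix.cons_val_one, Matrix.head_cons, Pi.star_apply, star_trivial] at h
    rw [hsym] at h
    nlinarith [h]
  have ha : 0 ≤ M 0 0 := by have := key 1 0; nlinarith
  have hb : 0 ≤ M 1 1 := by have := key 0 1; nlinarith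
  have hsq : (M 0 1) ^ 2 ≤ M 0 0 * M 1 1 := by
    rcases ha.lt_or_eq with h | h
    · have := key (M 0 1) (-(M 0 0))
      nlinarith
    · rcases hb.lt_or_eq with h' | h'
      · have := key (-(M 1 1)) (M 0 1)
        nlinarith
      · have h1 := key 1 1
        have h2 := key 1 (-1)
        nlinarith
  refine ⟨ha, hb, ?_⟩
  calc |M 0 1| = Real.sqrt ((M 0 1) ^ 2) := (Real.sqrt_sq_eq_abs _).symm
    _ ≤ Real.sqrt (M 0 0 * M 1 1) := Real.sqrt_le_sqrt hsq

theorem stmt18 (H : ℝ → Matrix (Fin 2) (Fin 2) ℝ) (hH : IsHamiltonian H)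
    (m₁ m₂ m₃ : ℝ → ℝ)
    (hm₁ : ∀ t, m₁ t = ∫ s in Ioc (0:ℝ) t, H s 0 0)
    (hm₂ : ∀ t, m₂ t = ∫ s in Ioc (0:ℝ) t, H s 1 1)
    (hm₃ : ∀ t, m₃ t = ∫ s in Ioc (0:ℝ) t, H s 0 1)
    (hm₁pos : ∀ t > (0:ℝ), 0 < m₁ t) (hm₂pos : ∀ t > (0:ℝ), 0 < m₂ t)
    (ρ₁ : ℝ) (hρ₁ : 0 < ρ₁) (hrv₁ : RegVaryAt0 m₁ ρ₁)
    (hrapid₂ : RapidVaryAt0 m₂) :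
    Tendsto (fun t => m₃ t / Real.sqrt (m₁ t * m₂ t)) (𝓝[>] (0:ℝ)) (𝓝 0) := by
  obtain ⟨hmeas, hint, haes, -⟩ := hH
  -- a.e. facts on a sub-interval of (0,∞)
  have hae_facts : ∀ a b : ℝ, 0 ≤ a →
      (∀ᵐ s ∂(volume.restrict (Ioc a b)),
        0 ≤ H s 0 0 ∧ 0 ≤ H s 1 1 ∧ |H s 0 1| ≤ Real.sqrt (H s 0 0 * H s 1 1)) := by
    intro a b ha
    filter_upwards [ae_restrict_of_ae haes, ae_restrict_mem measurableSet_Ioc] with s hs hmem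
    exact my_psd_entry (hs (lt_of_le_of_lt ha hmem.1)).1
  -- Cauchy–Schwarz bound on a sub-interval
  have hCS : ∀ a b : ℝ, 0 ≤ a → a ≤ b → 0 < b →
      |∫ s in Ioc a b, H s 0 1| ≤
        Real.sqrt ((∫ s in Ioc a b, H s 0 0) * (∫ s in Ioc a b, H s 1 1)) := by
    intro a b ha hab hb
    have hsub : Ioc a b ⊆ Ioc 0 b := Ioc_subset_Ioc_left ha
    have hint1 : IntegrableOn (fun s => H s 0 0) (Ioc a b) :=
      (hint b hb 0 0).mono_set hsub
    have hint2 : IntegrableOn (fun s => H s 1 1) (Ioc a b) :=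
      (hint b hb 1 1).mono_set hsub
    have hint3 : IntegrableOn (fun s => H s 0 1) (Ioc a b) :=
      (hint b hb 0 1).mono_set hsub
    have hae := hae_facts a b ha
    have h1 : |∫ s in Ioc a b, H s 0 1| ≤ ∫ s in Ioc a b, |H s 0 1| := by
      simpa [Real.norm_eq_abs] using
        norm_integral_le_integral_norm (μ := volume.restrict (Ioc a b))
          (fun s => H s 0 1)
    have hintabs : IntegrableOn (fun s => |H s 0 1|) (Ioc a b) := hint3.abs
    have hintsqrt : IntegrableOn (fun s => Real.sqrt (H s 0 0 * H s 1 1)) (Ioc a b) := by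
      refine MeasureTheory.Integrable.mono' ((hint1.add hint2).div_const 2)
        ((Real.continuous_sqrt.comp_aestronglyMeasurable
          (((hmeas 0 0).mul (hmeas 1 1)).aestronglyMeasurable.restrict))) ?_
      filter_upwards [hae] with s hs
      rw [Real.norm_eq_abs, abs_of_nonneg (Real.sqrt_nonneg _)]
      exact my_sqrt_mul_le_half_add hs.1 hs.2.1
    have h2 : (∫ s in Ioc a b, |H s 0 1|) ≤ ∫ s in Ioc a b, Real.sqrt (H s 0 0 * H s 1 1) := by
      refine integral_mono_ae hintabs hintsqrt ?_
      filter_upwards [hae] with s hs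
      exact hs.2.2
    have h3 := my_cs_integral hint1 hint2
      ((hae_facts a b ha).mono fun s hs => hs.1)
      ((hae_facts a b ha).mono fun s hs => hs.2.1)
    linarith
  -- splitting of the integrals
  have hsplit : ∀ (i j : Fin 2) (a t : ℝ), 0 < a → a ≤ t →
      (∫ s in Ioc (0:ℝ) t, H s i j) =
        (∫ s in Ioc (0:ℝ) a, H s i j) + ∫ s in Ioc a t, H s i j := by
    intro i j a t ha hat
    have ht : 0 < t := lt_of_lt_of_le ha hat
    rw [← setIntegral_union (Ioc_disjoint_Ioc_of_le le_rfl) measurableSet_Ioc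
      ((hint t ht i j).mono_set (Ioc_subset_Ioc_right hat))
      ((hint t ht i j).mono_set (Ioc_subset_Ioc_left ha.le)),
      Ioc_union_Ioc_eq_Ioc ha.le hat]
  -- nonnegativity of pieces
  have hpiece_nonneg : ∀ (hd : ((0:Fin 2) = 0 ∧ True) ∨ True) (a t : ℝ), True → True := fun _ _ _ _ => trivial
  clear hpiece_nonneg
  have hnn : ∀ (i : Fin 2) (a t : ℝ), 0 ≤ a → 0 ≤ ∫ s in Ioc a t, H s i i := by
    intro i a t ha
    refine setIntegral_nonneg_ae measurableSet_Ioc ?_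
    filter_upwards [haes] with s hs hmem
    have hps := (hs (lt_of_le_of_lt ha hmem.1)).1
    obtain ⟨h0, h1, -⟩ := my_psd_entry hps
    fin_cases i
    · exact h0
    · exact h1
  -- the main pointwise bound, for a fixed ratio l ∈ (0,1)
  have key : ∀ l : ℝ, l ∈ Ioo (0:ℝ) 1 → ∀ t : ℝ, 0 < t →
      |m₃ t / Real.sqrt (m₁ t * m₂ t)| ≤
        Real.sqrt ((m₁ (l*t) / m₁ t) * (m₂ (l*t) / m₂ t)) +
          Real.sqrt ((1 - m₁ (l*t) / m₁ t) * (1 - m₂ (l*t) / m₂ t)) := by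
    intro l hl t ht
    have ha : 0 < l * t := mul_pos hl.1 ht
    have hat : l * t ≤ t := by nlinarith [hl.2.le]
    set a := l * t
    set C₁ := m₁ t with hC₁
    set C₂ := m₂ t with hC₂
    set A₁ := m₁ a with hA₁
    set A₂ := m₂ a with hA₂
    set D₁ := ∫ s in Ioc a t, H s 0 0 with hD₁
    set D₂ := ∫ s in Ioc a t, H s 1 1 with hD₂
    set E := ∫ s in Ioc a t, H s 0 1 with hE
    have hC₁pos : 0 < C₁ := hm₁pos t ht
    have hC₂pos : 0 < C₂ := hm₂pos t ht
    have hA₁pos : 0 < A₁ := hm₁pos a ha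
    have hA₂pos : 0 < A₂ := hm₂pos a ha
    have hD₁nn : 0 ≤ D₁ := hnn 0 a t ha.le
    have hD₂nn : 0 ≤ D₂ := hnn 1 a t ha.le
    have hC₁eq : C₁ = A₁ + D₁ := by
      rw [hC₁, hA₁, hm₁, hm₁]; exact hsplit 0 0 a t ha hat
    have hC₂eq : C₂ = A₂ + D₂ := by
      rw [hC₂, hA₂, hm₂, hm₂]; exact hsplit 1 1 a t ha hat
    have hm₃eq : m₃ t = m₃ a + E := by
      rw [hm₃, hm₃, hE]; exact hsplit 0 1 a t ha hat
    have hE_bd : |E| ≤ Real.sqrt (D₁ * D₂) := hCS a t ha.le hat ht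
    have hm₃a_bd : |m₃ a| ≤ Real.sqrt (A₁ * A₂) := by
      rw [hm₃, hA₁, hA₂, hm₁, hm₂]
      exact hCS 0 a le_rfl ha.le ha
    have hnum : |m₃ t| ≤ Real.sqrt (A₁ * A₂) + Real.sqrt (D₁ * D₂) := by
      rw [hm₃eq]
      calc |m₃ a + E| ≤ |m₃ a| + |E| := abs_add_le _ _
        _ ≤ _ := add_le_add hm₃a_bd hE_bd
    have hCCpos : 0 < C₁ * C₂ := mul_pos hC₁pos hC₂pos
    have hsqC : 0 < Real.sqrt (C₁ * C₂) := Real.sqrt_pos.mpr hCCpos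
    have hu1 : 1 - A₁ / C₁ = D₁ / C₁ := by field_simp; linarith
    have hu2 : 1 - A₂ / C₂ = D₂ / C₂ := by field_simp; linarith
    have hr1 : (A₁ / C₁) * (A₂ / C₂) = (A₁ * A₂) / (C₁ * C₂) := div_mul_div_comm _ _ _ _
    have hr2 : (D₁ / C₁) * (D₂ / C₂) = (D₁ * D₂) / (C₁ * C₂) := div_mul_div_comm _ _ _ _
    rw [hu1, hu2, hr1, hr2, Real.sqrt_div (by positivity) (C₁ * C₂),
      Real.sqrt_div (by positivity) (C₁ * C₂), abs_div,
      abs_of_nonneg (Real.sqrt_nonneg (C₁ * C₂)), ← add_div,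
      div_le_div_iff_of_pos_right hsqC]
    exact hnum
  -- now the limit argument
  rw [Metric.tendsto_nhds]
  intro ε hε
  -- choose l close to 1
  obtain ⟨l, hl, hlpow⟩ : ∃ l : ℝ, l ∈ Ioo (0:ℝ) 1 ∧ 1 - l ^ ρ₁ < (ε / 2) ^ 2 := by
    have hcont : Tendsto (fun x : ℝ => x ^ ρ₁) (𝓝[<] (1:ℝ)) (𝓝 1) := by
      have h1 : ContinuousAt (fun x : ℝ => x ^ ρ₁) 1 :=
        Real.continuousAt_rpow_const 1 ρ₁ (Or.inl one_ne_zero)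
      have := h1.tendsto.mono_left (nhdsWithin_le_nhds (s := Iio (1:ℝ)))
      simpa [Real.one_rpow] using this
    have hev1 : ∀ᶠ x in 𝓝[<] (1:ℝ), 1 - (ε / 2) ^ 2 < x ^ ρ₁ :=
      hcont.eventually_const_lt (by nlinarith)
    have hev2 : ∀ᶠ x in 𝓝[<] (1:ℝ), x ∈ Ioo (0:ℝ) 1 :=
      Ioo_mem_nhdsLT_of_mem (by constructor <;> norm_num)
    obtain ⟨l, h1, h2⟩ := (hev1.and hev2).exists
    exact ⟨l, h2, by linarith⟩
  have hu₁ := hrv₁ l hl.1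
  have hu₂ := hrapid₂.1 l hl
  have hB : Tendsto (fun t => Real.sqrt ((m₁ (l*t) / m₁ t) * (m₂ (l*t) / m₂ t)) +
      Real.sqrt ((1 - m₁ (l*t) / m₁ t) * (1 - m₂ (l*t) / m₂ t))) (𝓝[>] (0:ℝ))
      (𝓝 (Real.sqrt (l ^ ρ₁ * 0) + Real.sqrt ((1 - l ^ ρ₁) * (1 - 0)))) :=
    ((hu₁.mul hu₂).sqrt).add
      (((tendsto_const_nhds.sub hu₁).mul (tendsto_const_nhds.sub hu₂)).sqrt)
  have hval : Real.sqrt (l ^ ρ₁ * 0) + Real.sqrt ((1 - l ^ ρ₁) * (1 - 0)) < ε := by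
    have h1 : Real.sqrt (l ^ ρ₁ * 0) = 0 := by simp
    have h2 : Real.sqrt ((1 - l ^ ρ₁) * (1 - 0)) < ε / 2 := by
      rw [mul_comm, sub_zero, one_mul]
      exact (Real.sqrt_lt' (by positivity)).mpr hlpow
    rw [h1, zero_add]
    exact h2.trans (by linarith)
  have hevB := hB.eventually_lt_const hval
  filter_upwards [hevB, self_mem_nhdsWithin] with t hBt (htpos : 0 < t)
  rw [Real.dist_eq, sub_zero]
  exact lt_of_le_of_lt (key l hl t htpos) hBt
end
end

section
/- Let H = [[h₁,h₃],[h₃,h₂]] be a Hamiltonian on (0,∞) with m_j(t) = ∫₀ᵗ h_j(s) ds, and assume m₁(t), m₂(t) > 0 for all t > 0. Suppose m₁ is regularly varying at 0 with index ρ₁ ∈ (0,∞), m₂ is regularly varying at 0 with index ρ₂ ∈ (0,∞), and the limit δ := lim_{t→0⁺} m₃(t)/√(m₁(t)m₂(t)) exists in ℝ; set ρ₃ = (ρ₁+ρ₂)/2. Let t̂ : (0,∞) → (0,∞) be a function with (m₁m₂)(t̂(r)) = 1/r² for all r > 0 and t̂(r) → 0 as r → ∞, and define b₁(r) = r·√(t̂(r)·m₂(t̂(r)))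 and b₂(r) = r·√(t̂(r)·m₁(t̂(r))). Define H̃(t) = [[ρ₁ t^{ρ₁−1}, δρ₃ t^{ρ₃−1}],[δρ₃ t^{ρ₃−1}, ρ₂ t^{ρ₂−1}]] for t > 0. Then H̃(t) is positive semidefinite for a.e. t > 0 (so H̃ is a Hamiltonian), and ∫₀ˣ (A_r^{b₁(r),b₂(r)} H)(s) ds → ∫₀ˣ H̃(s) ds as r → ∞, locally uniformly for x ∈ (0,∞); equivalently, for every x > 0: m₁(t̂(r)x)/m₁(t̂(r)) → x^{ρ₁}, m₂(t̂(r)x)/m₂(t̂(r)) → x^{ρ₂}, and m₃(t̂(r)x)/√(m₁(t̂(r))m₂(t̂(r))) → δ·x^{ρ₃} as r → ∞. -/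
open MeasureTheory Filter Set Topology Real

noncomputable section

lemma quad_nonneg {a b c : ℝ} (ha : 0 ≤ a) (hc : 0 ≤ c) (hb : b^2 ≤ a*c) (u v : ℝ) :
    0 ≤ a*u^2 + 2*b*u*v + c*v^2 := by
  rcases eq_or_lt_of_le ha with h | h
  · have hb0 : b = 0 := by nlinarith [sq_nonneg b]
    rw [← h, hb0]; simp; positivity
  · nlinarith [sq_nonneg (a*u + b*v), mul_nonneg (sub_nonneg.2 hb) (sq_nonneg v)]

lemma psd_fin_two {a b c : ℝ} (ha : 0 ≤ a) (hc : 0 ≤ c) (hb : b^2 ≤ a*c) :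
    (!![a, b; b, c]).PosSemidef := by
  refine Matrix.posSemidef_iff_dotProduct_mulVec.mpr ⟨?_, ?_⟩
  · ext i j
    fin_cases i <;> fin_cases j <;>
      simp [Matrix.conjTranspose, Matrix.transpose]
  · intro x
    have := quad_nonneg ha hc hb (x 0) (x 1)
    simp [dotProduct, Matrix.mulVec, Fin.sum_univ_two]
    nlinarith [this]

lemma psd_quad {M : Matrix (Fin 2) (Fin 2) ℝ} (h : M.PosSemidef) (t : ℝ) :
    0 ≤ t^2 * M 0 0 + 2*t * M 0 1 + M 1 1 := by
  have h2 := h.dotProduct_mulVec_nonneg ![t, 1]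
  have hsym : M 1 0 = M 0 1 := by
    have := congrFun (congrFun h.1 1) 0
    simpa [Matrix.conjTranspose] using this.symm
  simp [dotProduct, Matrix.mulVec, Fin.sum_univ_two, hsym] at h2
  nlinarith [h2]

lemma key_CS (H : ℝ → Matrix (Fin 2) (Fin 2) ℝ)
    (hint : ∀ x > (0:ℝ), ∀ i j : Fin 2, IntegrableOn (fun t => H t i j) (Ioc 0 x))
    (hae : ∀ᵐ t : ℝ, 0 < t → (H t).PosSemidef)
    (a b : ℝ) (h0 : 0 < a) (hab : a ≤ b) :
    (∫ s in Ioc a b, H s 0 1)^2 ≤ (∫ s in Ioc a b, H s 0 0) * (∫ s in Ioc a b, H s 1 1) := by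
  have hb0 : 0 < b := lt_of_lt_of_le h0 hab
  have i1 : IntegrableOn (fun t => H t 0 0) (Ioc a b) :=
    (hint b hb0 0 0).mono_set (Ioc_subset_Ioc_left h0.le)
  have i2 : IntegrableOn (fun t => H t 1 1) (Ioc a b) :=
    (hint b hb0 1 1).mono_set (Ioc_subset_Ioc_left h0.le)
  have i3 : IntegrableOn (fun t => H t 0 1) (Ioc a b) :=
    (hint b hb0 0 1).mono_set (Ioc_subset_Ioc_left h0.le)
  set A := ∫ s in Ioc a b, H s 0 0
  set B := ∫ s in Ioc a b, H s 0 1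
  set C := ∫ s in Ioc a b, H s 1 1
  have hQ : ∀ t : ℝ, 0 ≤ A * (t * t) + (2*B) * t + C := by
    intro t
    have i13 : IntegrableOn (fun s => t^2 * H s 0 0 + 2*t * H s 0 1) (Ioc a b) :=
      (i1.const_mul _).add (i3.const_mul _)
    have heq : A * (t*t) + (2*B)*t + C
        = ∫ s in Ioc a b, (t^2 * H s 0 0 + 2*t * H s 0 1 + H s 1 1) := by
      rw [integral_add i13 i2, integral_add (i1.const_mul _) (i3.const_mul _),
        integral_const_mul, integral_const_mul]
      ring
    rw [heq]
    apply integral_nonneg_of_ae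
    filter_upwards [ae_restrict_of_ae hae, ae_restrict_mem measurableSet_Ioc] with s hs hmem
    have hs0 : 0 < s := lt_trans h0 hmem.1
    exact psd_quad (hs hs0) t
  have hd := discrim_le_zero hQ
  rw [discrim] at hd
  nlinarith [hd]

lemma mdiff (H : ℝ → Matrix (Fin 2) (Fin 2) ℝ)
    (hint : ∀ x > (0:ℝ), ∀ i j : Fin 2, IntegrableOn (fun t => H t i j) (Ioc 0 x))
    (i j : Fin 2) (a b : ℝ) (h0 : 0 < a) (hab : a ≤ b) :
    (∫ s in Ioc (0:ℝ) b, H s i j) - (∫ s in Ioc (0:ℝ) a, H s i j)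
      = ∫ s in Ioc a b, H s i j := by
  have hb0 : 0 < b := lt_of_lt_of_le h0 hab
  have hb := hint b hb0 i j
  have h1 : IntegrableOn (fun t => H t i j) (Ioc 0 a) := hb.mono_set (Ioc_subset_Ioc_right hab)
  have h2 : IntegrableOn (fun t => H t i j) (Ioc a b) := hb.mono_set (Ioc_subset_Ioc_left h0.le)
  have hu : Ioc (0:ℝ) a ∪ Ioc a b = Ioc 0 b := Ioc_union_Ioc_eq_Ioc h0.le hab
  rw [← hu, setIntegral_union (Ioc_disjoint_Ioc_of_le le_rfl) measurableSet_Ioc h1 h2]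
  ring

lemma ioc_scale (f : ℝ → ℝ) (T x : ℝ) (hT : 0 < T) :
    ∫ s in Ioc (0:ℝ) x, f (T * s) = T⁻¹ * ∫ s in Ioc 0 (T * x), f s := by
  rcases le_or_gt x 0 with h | h
  · rw [Ioc_eq_empty (by simpa using h), Ioc_eq_empty (by simp; nlinarith)]
    simp
  · rw [← intervalIntegral.integral_of_le h.le,
      ← intervalIntegral.integral_of_le (by positivity : (0:ℝ) ≤ T * x)]
    rw [intervalIntegral.integral_comp_mul_left f hT.ne']
    simp

lemma ioc_rpow (ρ : ℝ) (hρ : 0 < ρ) (x : ℝ) (hx : 0 < x) :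
    ∫ s in Ioc (0:ℝ) x, ρ * s ^ (ρ - 1) = x ^ ρ := by
  rw [← intervalIntegral.integral_of_le hx.le, intervalIntegral.integral_const_mul,
    integral_rpow (Or.inl (by linarith))]
  rw [Real.zero_rpow (by linarith : ρ - 1 + 1 ≠ 0)]
  rw [sub_add_cancel, sub_zero]
  field_simp

lemma slope_rpow (ρ : ℝ) : Tendsto (fun x : ℝ => (x ^ ρ - 1)/(x - 1)) (𝓝[>] 1) (𝓝 ρ) := by
  have h : HasDerivAt (fun x : ℝ => x ^ ρ) (ρ * (1:ℝ) ^ (ρ - 1)) 1 :=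
    Real.hasDerivAt_rpow_const (Or.inl one_ne_zero)
  have h2 := hasDerivAt_iff_tendsto_slope.mp h
  have h3 : Tendsto (slope (fun x : ℝ => x ^ ρ) 1) (𝓝[>] 1) (𝓝 (ρ * (1:ℝ) ^ (ρ-1))) :=
    h2.mono_left (nhdsWithin_mono _ fun y hy => ne_of_gt hy)
  have h4 : ρ * (1:ℝ) ^ (ρ - 1) = ρ := by simp
  rw [h4] at h3
  refine h3.congr (fun y => ?_)
  simp [slope, Real.one_rpow, div_eq_inv_mul]

lemma polya_CS (F₁ F₂ F₃ : ℝ → ℝ → ℝ) (G₁ G₂ G₃ : ℝ → ℝ)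
    (hmono₁ : ∀ᶠ r in atTop, MonotoneOn (F₁ r) (Ioi 0))
    (hmono₂ : ∀ᶠ r in atTop, MonotoneOn (F₂ r) (Ioi 0))
    (hCS : ∀ᶠ r in atTop, ∀ a b : ℝ, 0 < a → a ≤ b →
      |F₃ r b - F₃ r a| ≤ Real.sqrt ((F₁ r b - F₁ r a) * (F₂ r b - F₂ r a)))
    (hG₁ : ContinuousOn G₁ (Ioi 0)) (hG₂ : ContinuousOn G₂ (Ioi 0))
    (hG₃ : ContinuousOn G₃ (Ioi 0))
    (hpt₁ : ∀ x ∈ Ioi (0:ℝ), Tendsto (fun r => F₁ r x) atTop (𝓝 (G₁ x)))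
    (hpt₂ : ∀ x ∈ Ioi (0:ℝ), Tendsto (fun r => F₂ r x) atTop (𝓝 (G₂ x)))
    (hpt₃ : ∀ x ∈ Ioi (0:ℝ), Tendsto (fun r => F₃ r x) atTop (𝓝 (G₃ x))) :
    TendstoLocallyUniformlyOn F₃ G₃ atTop (Ioi 0) := by
  rw [Metric.tendstoLocallyUniformlyOn_iff]
  intro ε hε x hx
  set η : ℝ := ε / 13 with hη
  have hηpos : 0 < η := by positivity
  -- find a neighborhood of x inside Ioi 0 where G₁, G₂, G₃ vary little
  have hcont : ∀ᶠ w in 𝓝 x, w ∈ Ioi 0 ∧ |G₁ w - G₁ x| < η ∧ |G₂ w - G₂ x| < η ∧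
      |G₃ w - G₃ x| < ε / 3 := by
    have h1 : ContinuousAt G₁ x := (hG₁ x hx).continuousAt (Ioi_mem_nhds hx)
    have h2 : ContinuousAt G₂ x := (hG₂ x hx).continuousAt (Ioi_mem_nhds hx)
    have h3 : ContinuousAt G₃ x := (hG₃ x hx).continuousAt (Ioi_mem_nhds hx)
    have e1 := h1 (Metric.ball_mem_nhds (G₁ x) hηpos)
    have e2 := h2 (Metric.ball_mem_nhds (G₂ x) hηpos)
    have e3 := h3 (Metric.ball_mem_nhds (G₃ x) (by positivity : (0:ℝ) < ε/3))
    filter_upwards [Ioi_mem_nhds hx, e1, e2, e3] with w hw w1 w2 w3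
    refine ⟨hw, ?_, ?_, ?_⟩
    · simpa [Real.dist_eq] using w1
    · simpa [Real.dist_eq] using w2
    · simpa [Real.dist_eq] using w3
  obtain ⟨θ, hθpos, hθ⟩ := Metric.eventually_nhds_iff_ball.mp hcont
  set y : ℝ := x - θ/2 ⊓ x/2 with hy
  set z : ℝ := x + θ/2 with hz
  have hx0 : (0:ℝ) < x := hx
  have hmin1 : θ/2 ⊓ x/2 ≤ θ/2 := min_le_left _ _
  have hmin2 : θ/2 ⊓ x/2 ≤ x/2 := min_le_right _ _
  have hmin0 : 0 < θ/2 ⊓ x/2 := lt_min (by positivity) (by positivity)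
  have hyx : y < x := by rw [hy]; linarith
  have hxz : x < z := by rw [hz]; linarith
  have hymem : y ∈ Metric.ball x θ := by
    rw [Metric.mem_ball, Real.dist_eq, abs_sub_lt_iff, hy]
    constructor <;> linarith
  have hzmem : z ∈ Metric.ball x θ := by
    rw [Metric.mem_ball, Real.dist_eq, abs_sub_lt_iff, hz]
    constructor <;> linarith
  have hy0 : 0 < y := by rw [hy]; linarith
  have hsub : Metric.ball x θ ⊆ Ioi 0 := fun w hw => (hθ w hw).1
  refine ⟨Ioo y z, ?_, ?_⟩
  · exact nhdsWithin_le_nhds (Ioo_mem_nhds hyx hxz)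
  · have hy' := hθ y hymem
    have hz' := hθ z hzmem
    have l1y := Metric.tendsto_nhds.mp (hpt₁ y hy0) η hηpos
    have l1z := Metric.tendsto_nhds.mp (hpt₁ z (hsub hzmem)) η hηpos
    have l2y := Metric.tendsto_nhds.mp (hpt₂ y hy0) η hηpos
    have l2z := Metric.tendsto_nhds.mp (hpt₂ z (hsub hzmem)) η hηpos
    have l3x := Metric.tendsto_nhds.mp (hpt₃ x hx) (ε/3) (by positivity)
    filter_upwards [hmono₁, hmono₂, hCS, l1y, l1z, l2y, l2z, l3x] with r
      hm1 hm2 hcs d1y d1z d2y d2z d3x w hw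
    have hw0 : 0 < w := lt_trans hy0 hw.1
    have hwball : w ∈ Metric.ball x θ := by
      rw [Metric.mem_ball, Real.dist_eq, abs_sub_lt_iff]
      have h1 : θ/2 ⊓ x/2 ≤ θ/2 := min_le_left _ _
      obtain ⟨hw1, hw2⟩ := hw
      constructor <;> simp [hy, hz] at hw1 hw2 ⊢ <;> linarith
    have hw' := hθ w hwball
    rw [Real.dist_eq] at d1y d1z d2y d2z d3x ⊢
    -- bound |F₃ r w - F₃ r x|
    have hd1 : F₁ r z - F₁ r y ≤ 4 * η := by
      have a1 : |F₁ r y - G₁ y| < η := d1y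
      have a2 : |F₁ r z - G₁ z| < η := d1z
      have b1 : |G₁ y - G₁ x| < η := hy'.2.1
      have b2 : |G₁ z - G₁ x| < η := hz'.2.1
      rw [abs_sub_lt_iff] at a1 a2 b1 b2
      linarith [a1.1, a1.2, a2.1, a2.2, b1.1, b1.2, b2.1, b2.2]
    have hd2 : F₂ r z - F₂ r y ≤ 4 * η := by
      have a1 : |F₂ r y - G₂ y| < η := d2y
      have a2 : |F₂ r z - G₂ z| < η := d2z
      have b1 : |G₂ y - G₂ x| < η := hy'.2.2.1
      have b2 : |G₂ z - G₂ x| < η := hz'.2.2.1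
      rw [abs_sub_lt_iff] at a1 a2 b1 b2
      linarith [a1.1, a1.2, a2.1, a2.2, b1.1, b1.2, b2.1, b2.2]
    have key : |F₃ r w - F₃ r x| ≤ 4 * η := by
      have hz0 : 0 < z := lt_trans hx.out hxz
      have bound : ∀ a b : ℝ, 0 < a → a ≤ b → y ≤ a → b ≤ z →
          |F₃ r b - F₃ r a| ≤ 4 * η := by
        intro a b ha hab hya hbz
        refine (hcs a b ha hab).trans ?_
        have e1 : F₁ r b - F₁ r a ≤ F₁ r z - F₁ r y := by
          have := hm1 (mem_Ioi.mpr hy0) (mem_Ioi.mpr ha) hya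
          have := hm1 (mem_Ioi.mpr (lt_of_lt_of_le ha hab)) (mem_Ioi.mpr hz0) hbz
          linarith
        have e2 : F₂ r b - F₂ r a ≤ F₂ r z - F₂ r y := by
          have := hm2 (mem_Ioi.mpr hy0) (mem_Ioi.mpr ha) hya
          have := hm2 (mem_Ioi.mpr (lt_of_lt_of_le ha hab)) (mem_Ioi.mpr hz0) hbz
          linarith
        have n1 : 0 ≤ F₁ r b - F₁ r a := by
          have := hm1 (mem_Ioi.mpr ha) (mem_Ioi.mpr (lt_of_lt_of_le ha hab)) hab
          linarith
        have n2 : 0 ≤ F₂ r b - F₂ r a := by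
          have := hm2 (mem_Ioi.mpr ha) (mem_Ioi.mpr (lt_of_lt_of_le ha hab)) hab
          linarith
        calc Real.sqrt ((F₁ r b - F₁ r a) * (F₂ r b - F₂ r a))
            ≤ Real.sqrt ((4*η) * (4*η)) := by
              apply Real.sqrt_le_sqrt
              apply mul_le_mul (e1.trans hd1) (e2.trans hd2) n2 (by positivity)
          _ = 4 * η := Real.sqrt_mul_self (by positivity)
      rcases le_total w x with h | h
      · have := bound w x hw0 h (le_of_lt hw.1) (le_of_lt hxz)
        rwa [abs_sub_comm]
      · exact bound x w hx.out h (le_of_lt hyx) (le_of_lt hw.2)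
    calc |G₃ w - F₃ r w| ≤ |G₃ w - G₃ x| + |G₃ x - F₃ r x| + |F₃ r x - F₃ r w| := by
          have := abs_sub_le (G₃ w) (G₃ x) (F₃ r x)
          have := abs_sub_le (G₃ w) (F₃ r x) (F₃ r w)
          linarith
      _ < ε/3 + ε/3 + 4*η := by
          have h3 : |G₃ x - F₃ r x| < ε/3 := by rw [abs_sub_comm]; exact d3x
          have h1 : |G₃ w - G₃ x| < ε/3 := hw'.2.2.2
          have h2 : |F₃ r x - F₃ r w| ≤ 4*η := by rw [abs_sub_comm]; exact key
          linarith
      _ < ε := by rw [hη]; linarith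
theorem stmt19 (H : ℝ → Matrix (Fin 2) (Fin 2) ℝ) (hH : IsHamiltonian H)
    (m₁ m₂ m₃ : ℝ → ℝ)
    (hm₁ : ∀ t, m₁ t = ∫ s in Ioc (0:ℝ) t, H s 0 0)
    (hm₂ : ∀ t, m₂ t = ∫ s in Ioc (0:ℝ) t, H s 1 1)
    (hm₃ : ∀ t, m₃ t = ∫ s in Ioc (0:ℝ) t, H s 0 1)
    (hm₁pos : ∀ t > (0:ℝ), 0 < m₁ t) (hm₂pos : ∀ t > (0:ℝ), 0 < m₂ t)
    (ρ₁ ρ₂ : ℝ) (hρ₁ : 0 < ρ₁) (hρ₂ : 0 < ρ₂)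
    (hrv₁ : RegVaryAt0 m₁ ρ₁) (hrv₂ : RegVaryAt0 m₂ ρ₂)
    (δ : ℝ)
    (hδ : Tendsto (fun t => m₃ t / Real.sqrt (m₁ t * m₂ t)) (𝓝[>] (0:ℝ)) (𝓝 δ))
    (ρ₃ : ℝ) (hρ₃ : ρ₃ = (ρ₁ + ρ₂) / 2)
    (that : ℝ → ℝ)
    (hthatpos : ∀ r > (0:ℝ), 0 < that r)
    (hthat : ∀ r > (0:ℝ), m₁ (that r) * m₂ (that r) = 1 / r ^ 2)
    (hthat0 : Tendsto that atTop (𝓝 0))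
    (b₁ b₂ : ℝ → ℝ)
    (hb₁ : ∀ r, b₁ r = r * Real.sqrt (that r * m₂ (that r)))
    (hb₂ : ∀ r, b₂ r = r * Real.sqrt (that r * m₁ (that r)))
    (Htilde : ℝ → Matrix (Fin 2) (Fin 2) ℝ)
    (hHtilde : ∀ t, Htilde t =
      !![ρ₁ * t ^ (ρ₁ - 1), δ * ρ₃ * t ^ (ρ₃ - 1);
         δ * ρ₃ * t ^ (ρ₃ - 1), ρ₂ * t ^ (ρ₂ - 1)]) :
    (∀ᵐ t : ℝ, 0 < t → (Htilde t).PosSemidef) ∧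
    -- locally uniform convergence of the rescaled primitives, entrywise
    (TendstoLocallyUniformlyOn
        (fun (r : ℝ) (x : ℝ) => ∫ s in Ioc (0:ℝ) x, b₁ r ^ 2 * H (b₁ r * b₂ r * s / r) 0 0)
        (fun x => ∫ s in Ioc (0:ℝ) x, Htilde s 0 0) atTop (Ioi 0) ∧
      TendstoLocallyUniformlyOn
        (fun (r : ℝ) (x : ℝ) => ∫ s in Ioc (0:ℝ) x, b₂ r ^ 2 * H (b₁ r * b₂ r * s / r) 1 1)
        (fun x => ∫ s in Ioc (0:ℝ) x, Htilde s 1 1) atTop (Ioi 0) ∧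
      TendstoLocallyUniformlyOn
        (fun (r : ℝ) (x : ℝ) => ∫ s in Ioc (0:ℝ) x, b₁ r * b₂ r * H (b₁ r * b₂ r * s / r) 0 1)
        (fun x => ∫ s in Ioc (0:ℝ) x, Htilde s 0 1) atTop (Ioi 0)) ∧
    -- equivalently, pointwise limits of the rescaled primitives
    (∀ x > (0:ℝ),
      Tendsto (fun r => m₁ (that r * x) / m₁ (that r)) atTop (𝓝 (x ^ ρ₁)) ∧
      Tendsto (fun r => m₂ (that r * x) / m₂ (that r)) atTop (𝓝 (x ^ ρ₂)) ∧
      Tendsto (fun r => m₃ (that r * x) / Real.sqrt (m₁ (that r) * m₂ (that r))) atTop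
        (𝓝 (δ * x ^ ρ₃))) := by
  obtain ⟨hmeas, hint, hae', hni⟩ := hH
  have hae : ∀ᵐ t : ℝ, 0 < t → (H t).PosSemidef := hae'.mono fun t h ht => (h ht).1
  have hρ₃pos : 0 < ρ₃ := by rw [hρ₃]; linarith
  -- difference formulas
  have hm₁diff : ∀ a b : ℝ, 0 < a → a ≤ b → m₁ b - m₁ a = ∫ s in Ioc a b, H s 0 0 := by
    intro a b h0 hab; rw [hm₁, hm₁]; exact mdiff H hint 0 0 a b h0 hab
  have hm₂diff : ∀ a b : ℝ, 0 < a → a ≤ b → m₂ b - m₂ a = ∫ s in Ioc a b, H s 1 1 := by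
    intro a b h0 hab; rw [hm₂, hm₂]; exact mdiff H hint 1 1 a b h0 hab
  have hm₃diff : ∀ a b : ℝ, 0 < a → a ≤ b → m₃ b - m₃ a = ∫ s in Ioc a b, H s 0 1 := by
    intro a b h0 hab; rw [hm₃, hm₃]; exact mdiff H hint 0 1 a b h0 hab
  -- nonnegativity of diagonal entries a.e.
  have hae00 : ∀ᵐ t : ℝ, 0 < t → 0 ≤ H t 0 0 := by
    refine hae.mono fun t h ht => ?_
    have := psd_quad (h ht) 1
    have h2 := (h ht).dotProduct_mulVec_nonneg ![1, 0]
    simpa [dotProduct, Matrix.mulVec, Fin.sum_univ_two] using h2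
  have hae11 : ∀ᵐ t : ℝ, 0 < t → 0 ≤ H t 1 1 := by
    refine hae.mono fun t h ht => ?_
    have h2 := (h ht).dotProduct_mulVec_nonneg ![0, 1]
    simpa [dotProduct, Matrix.mulVec, Fin.sum_univ_two] using h2
  -- monotonicity of m₁, m₂
  have hm₁mono : ∀ a b : ℝ, 0 < a → a ≤ b → m₁ a ≤ m₁ b := by
    intro a b h0 hab
    have h := hm₁diff a b h0 hab
    have hnn : 0 ≤ ∫ s in Ioc a b, H s 0 0 := by
      apply integral_nonneg_of_ae
      filter_upwards [ae_restrict_of_ae hae00, ae_restrict_mem measurableSet_Ioc] with s hs hmem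
      exact hs (lt_trans h0 hmem.1)
    linarith
  have hm₂mono : ∀ a b : ℝ, 0 < a → a ≤ b → m₂ a ≤ m₂ b := by
    intro a b h0 hab
    have h := hm₂diff a b h0 hab
    have hnn : 0 ≤ ∫ s in Ioc a b, H s 1 1 := by
      apply integral_nonneg_of_ae
      filter_upwards [ae_restrict_of_ae hae11, ae_restrict_mem measurableSet_Ioc] with s hs hmem
      exact hs (lt_trans h0 hmem.1)
    linarith
  -- Cauchy-Schwarz inequality in terms of m
  have hCSm : ∀ a b : ℝ, 0 < a → a ≤ b →
      (m₃ b - m₃ a)^2 ≤ (m₁ b - m₁ a) * (m₂ b - m₂ a) := by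
    intro a b h0 hab
    rw [hm₁diff a b h0 hab, hm₂diff a b h0 hab, hm₃diff a b h0 hab]
    exact key_CS H hint hae a b h0 hab
  have hCSabs : ∀ a b : ℝ, 0 < a → a ≤ b →
      |m₃ b - m₃ a| ≤ Real.sqrt ((m₁ b - m₁ a) * (m₂ b - m₂ a)) := by
    intro a b h0 hab
    have := Real.sqrt_le_sqrt (hCSm a b h0 hab)
    rwa [Real.sqrt_sq_eq_abs] at this
  -- facts for r ≥ 1
  have hsqrt : ∀ r : ℝ, 1 ≤ r → Real.sqrt (m₁ (that r) * m₂ (that r)) = 1/r := by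
    intro r hr
    have hr0 : (0:ℝ) < r := by linarith
    rw [hthat r hr0, show (1:ℝ)/r^2 = (1/r)^2 by ring, Real.sqrt_sq (by positivity)]
  have hbb : ∀ r : ℝ, 1 ≤ r → b₁ r * b₂ r = r * that r := by
    intro r hr
    have hr0 : (0:ℝ) < r := by linarith
    have hT : 0 < that r := hthatpos r hr0
    have h1 : 0 < m₁ (that r) := hm₁pos _ hT
    have h2 : 0 < m₂ (that r) := hm₂pos _ hT
    rw [hb₁, hb₂]
    rw [show r * Real.sqrt (that r * m₂ (that r)) * (r * Real.sqrt (that r * m₁ (that r)))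
      = r^2 * (Real.sqrt (that r * m₂ (that r)) * Real.sqrt (that r * m₁ (that r))) by ring]
    rw [← Real.sqrt_mul (by positivity)]
    rw [show that r * m₂ (that r) * (that r * m₁ (that r))
      = (that r)^2 * (m₁ (that r) * m₂ (that r)) by ring]
    rw [hthat r hr0, show (that r)^2 * (1/r^2) = (that r / r)^2 by ring,
      Real.sqrt_sq (by positivity)]
    field_simp
  have hArg : ∀ r : ℝ, 1 ≤ r → ∀ s : ℝ, b₁ r * b₂ r * s / r = that r * s := by
    intro r hr s
    have hr0 : (0:ℝ) < r := by linarith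
    rw [hbb r hr]
    field_simp
  have hb1sq : ∀ r : ℝ, 1 ≤ r → b₁ r ^ 2 = r^2 * (that r * m₂ (that r)) := by
    intro r hr
    have hr0 : (0:ℝ) < r := by linarith
    have hT : 0 < that r := hthatpos r hr0
    have h2 : 0 < m₂ (that r) := hm₂pos _ hT
    rw [hb₁, mul_pow, Real.sq_sqrt (by positivity)]
  have hb2sq : ∀ r : ℝ, 1 ≤ r → b₂ r ^ 2 = r^2 * (that r * m₁ (that r)) := by
    intro r hr
    have hr0 : (0:ℝ) < r := by linarith
    have hT : 0 < that r := hthatpos r hr0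
    have h1 : 0 < m₁ (that r) := hm₁pos _ hT
    rw [hb₂, mul_pow, Real.sq_sqrt (by positivity)]
  -- the rescaled primitives in terms of m
  have Feq₁ : ∀ r : ℝ, 1 ≤ r → ∀ x : ℝ,
      (∫ s in Ioc (0:ℝ) x, b₁ r ^ 2 * H (b₁ r * b₂ r * s / r) 0 0)
        = m₁ (that r * x) / m₁ (that r) := by
    intro r hr x
    have hr0 : (0:ℝ) < r := by linarith
    have hT : 0 < that r := hthatpos r hr0
    have h1 : 0 < m₁ (that r) := hm₁pos _ hT
    simp only [hArg r hr]
    rw [integral_const_mul, ioc_scale (fun t => H t 0 0) (that r) x hT, ← hm₁, hb1sq r hr]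
    have hr2 : r^2 * (m₁ (that r) * m₂ (that r)) = 1 := by
      rw [hthat r hr0]; field_simp
    rw [div_eq_inv_mul]
    field_simp
    linear_combination (m₁ (that r * x)) * hr2
  have Feq₂ : ∀ r : ℝ, 1 ≤ r → ∀ x : ℝ,
      (∫ s in Ioc (0:ℝ) x, b₂ r ^ 2 * H (b₁ r * b₂ r * s / r) 1 1)
        = m₂ (that r * x) / m₂ (that r) := by
    intro r hr x
    have hr0 : (0:ℝ) < r := by linarith
    have hT : 0 < that r := hthatpos r hr0
    have h2 : 0 < m₂ (that r) := hm₂pos _ hT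
    simp only [hArg r hr]
    rw [integral_const_mul, ioc_scale (fun t => H t 1 1) (that r) x hT, ← hm₂, hb2sq r hr]
    have hr2 : r^2 * (m₁ (that r) * m₂ (that r)) = 1 := by
      rw [hthat r hr0]; field_simp
    rw [div_eq_inv_mul]
    field_simp
    linear_combination (m₂ (that r * x)) * hr2
  have Feq₃ : ∀ r : ℝ, 1 ≤ r → ∀ x : ℝ,
      (∫ s in Ioc (0:ℝ) x, b₁ r * b₂ r * H (b₁ r * b₂ r * s / r) 0 1)
        = m₃ (that r * x) / Real.sqrt (m₁ (that r) * m₂ (that r)) := by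
    intro r hr x
    have hr0 : (0:ℝ) < r := by linarith
    have hT : 0 < that r := hthatpos r hr0
    simp only [hArg r hr]
    rw [integral_const_mul, ioc_scale (fun t => H t 0 1) (that r) x hT, ← hm₃,
      hbb r hr, hsqrt r hr]
    field_simp
  -- that r → 0 within (0,∞)
  have hthat0' : Tendsto that atTop (𝓝[>] (0:ℝ)) := by
    apply tendsto_nhdsWithin_of_tendsto_nhds_of_eventually_within _ hthat0
    filter_upwards [eventually_ge_atTop (1:ℝ)] with r hr
    exact hthatpos r (by linarith)
  have hthatx : ∀ x : ℝ, 0 < x → Tendsto (fun r => that r * x) atTop (𝓝[>] (0:ℝ)) := by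
    intro x hx
    apply tendsto_nhdsWithin_of_tendsto_nhds_of_eventually_within
    · simpa using hthat0.mul_const x
    · filter_upwards [eventually_ge_atTop (1:ℝ)] with r hr
      exact mul_pos (hthatpos r (by linarith)) hx
  -- pointwise limits
  have lim₁ : ∀ x : ℝ, 0 < x →
      Tendsto (fun r => m₁ (that r * x) / m₁ (that r)) atTop (𝓝 (x ^ ρ₁)) := by
    intro x hx
    have h := (hrv₁ x hx).comp hthat0'
    refine h.congr fun r => ?_
    simp [Function.comp, mul_comm]
  have lim₂ : ∀ x : ℝ, 0 < x →
      Tendsto (fun r => m₂ (that r * x) / m₂ (that r)) atTop (𝓝 (x ^ ρ₂)) := by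
    intro x hx
    have h := (hrv₂ x hx).comp hthat0'
    refine h.congr fun r => ?_
    simp [Function.comp, mul_comm]
  have limδ : ∀ x : ℝ, 0 < x →
      Tendsto (fun r => m₃ (that r * x) /
        Real.sqrt (m₁ (that r * x) * m₂ (that r * x))) atTop (𝓝 δ) := by
    intro x hx
    exact hδ.comp (hthatx x hx)
  have lim₃ : ∀ x : ℝ, 0 < x →
      Tendsto (fun r => m₃ (that r * x) / Real.sqrt (m₁ (that r) * m₂ (that r))) atTop
        (𝓝 (δ * x ^ ρ₃)) := by
    intro x hx
    have hmain := (limδ x hx).mul ((lim₁ x hx).mul (lim₂ x hx)).sqrt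
    have hval : δ * Real.sqrt (x^ρ₁ * x^ρ₂) = δ * x^ρ₃ := by
      rw [← Real.rpow_add hx, Real.sqrt_eq_rpow, ← Real.rpow_mul hx.le]
      have he : (ρ₁ + ρ₂) * (1/2) = ρ₃ := by rw [hρ₃]; ring
      rw [he]
    rw [hval] at hmain
    refine hmain.congr' ?_
    filter_upwards [eventually_ge_atTop (1:ℝ)] with r hr
    have hr0 : (0:ℝ) < r := by linarith
    have hT : 0 < that r := hthatpos r hr0
    have hTx : 0 < that r * x := mul_pos hT hx
    have a1 : 0 < m₁ (that r * x) := hm₁pos _ hTx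
    have a2 : 0 < m₂ (that r * x) := hm₂pos _ hTx
    have c1 : 0 < m₁ (that r) := hm₁pos _ hT
    have c2 : 0 < m₂ (that r) := hm₂pos _ hT
    have e : m₁ (that r * x) / m₁ (that r) * (m₂ (that r * x) / m₂ (that r))
        = (m₁ (that r * x) * m₂ (that r * x)) / (m₁ (that r) * m₂ (that r)) := by ring
    rw [e, Real.sqrt_div (le_of_lt (mul_pos a1 a2))]
    have hs : Real.sqrt (m₁ (that r * x) * m₂ (that r * x)) ≠ 0 := by positivity
    have hs2 : Real.sqrt (m₁ (that r) * m₂ (that r)) ≠ 0 := by positivity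
    field_simp
  -- the bound δ²ρ₃² ≤ ρ₁ρ₂
  have step1 : ∀ x : ℝ, 1 < x → (δ * (x^ρ₃ - 1))^2 ≤ (x^ρ₁ - 1) * (x^ρ₂ - 1) := by
    intro x hx1
    have hx0 : (0:ℝ) < x := by linarith
    have hA : Tendsto (fun r => ((m₃ (that r * x) - m₃ (that r)) /
        Real.sqrt (m₁ (that r) * m₂ (that r)))^2) atTop (𝓝 ((δ * (x^ρ₃ - 1))^2)) := by
      have h1 := (lim₃ x hx0).sub (lim₃ 1 one_pos)
      have h2 : Tendsto (fun r => (m₃ (that r * x) - m₃ (that r)) /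
          Real.sqrt (m₁ (that r) * m₂ (that r))) atTop (𝓝 (δ * x^ρ₃ - δ * 1^ρ₃)) := by
        refine h1.congr fun r => ?_
        rw [mul_one, div_sub_div_same]
      have h3 : δ * x^ρ₃ - δ * 1^ρ₃ = δ * (x^ρ₃ - 1) := by
        rw [Real.one_rpow]; ring
      rw [h3] at h2
      exact h2.pow 2
    have hB : Tendsto (fun r => (m₁ (that r * x) / m₁ (that r) - 1) *
        (m₂ (that r * x) / m₂ (that r) - 1)) atTop (𝓝 ((x^ρ₁ - 1) * (x^ρ₂ - 1))) :=
      ((lim₁ x hx0).sub tendsto_const_nhds).mul ((lim₂ x hx0).sub tendsto_const_nhds)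
    refine le_of_tendsto_of_tendsto hA hB ?_
    filter_upwards [eventually_ge_atTop (1:ℝ)] with r hr
    have hr0 : (0:ℝ) < r := by linarith
    have hT : 0 < that r := hthatpos r hr0
    have hTx : that r ≤ that r * x := by nlinarith
    have c1 : 0 < m₁ (that r) := hm₁pos _ hT
    have c2 : 0 < m₂ (that r) := hm₂pos _ hT
    have hcs := hCSm (that r) (that r * x) hT hTx
    have hq : ((m₃ (that r * x) - m₃ (that r)) / Real.sqrt (m₁ (that r) * m₂ (that r)))^2
        = (m₃ (that r * x) - m₃ (that r))^2 / (m₁ (that r) * m₂ (that r)) := by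
      rw [div_pow, Real.sq_sqrt (by positivity)]
    have hq2 : (m₁ (that r * x) / m₁ (that r) - 1) * (m₂ (that r * x) / m₂ (that r) - 1)
        = ((m₁ (that r * x) - m₁ (that r)) * (m₂ (that r * x) - m₂ (that r)))
          / (m₁ (that r) * m₂ (that r)) := by
      field_simp
    rw [hq, hq2]
    exact (div_le_div_iff_of_pos_right (by positivity)).mpr hcs
  have hδb : δ^2 * ρ₃^2 ≤ ρ₁ * ρ₂ := by
    have hA : Tendsto (fun x : ℝ => (δ * ((x^ρ₃ - 1)/(x - 1)))^2) (𝓝[>] 1)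
        (𝓝 ((δ * ρ₃)^2)) := ((tendsto_const_nhds.mul (slope_rpow ρ₃)).pow 2)
    have hB : Tendsto (fun x : ℝ => ((x^ρ₁ - 1)/(x - 1)) * ((x^ρ₂ - 1)/(x - 1))) (𝓝[>] 1)
        (𝓝 (ρ₁ * ρ₂)) := (slope_rpow ρ₁).mul (slope_rpow ρ₂)
    have hle : (δ * ρ₃)^2 ≤ ρ₁ * ρ₂ := by
      refine le_of_tendsto_of_tendsto hA hB ?_
      filter_upwards [self_mem_nhdsWithin] with x hx
      have hx1 : (1:ℝ) < x := hx
      have hne : x - 1 ≠ 0 := by linarith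
      have h2 : (0:ℝ) < (x - 1)^2 := by
        apply pow_pos; linarith
      have e1 : (δ * ((x^ρ₃ - 1)/(x - 1)))^2 = (δ * (x^ρ₃ - 1))^2 / (x - 1)^2 := by
        field_simp
      have e2 : ((x^ρ₁ - 1)/(x - 1)) * ((x^ρ₂ - 1)/(x - 1))
          = ((x^ρ₁ - 1) * (x^ρ₂ - 1)) / (x - 1)^2 := by
        rw [div_mul_div_comm]
        congr 1
        ring
      rw [e1, e2]
      exact (div_le_div_iff_of_pos_right h2).mpr (step1 x hx1)
    nlinarith [hle]
  -- continuity of the limit functions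
  have hcont₁ : ContinuousOn (fun x : ℝ => x^ρ₁) (Ioi 0) := fun x hx =>
    (Real.continuousAt_rpow_const x ρ₁ (Or.inl (ne_of_gt hx))).continuousWithinAt
  have hcont₂ : ContinuousOn (fun x : ℝ => x^ρ₂) (Ioi 0) := fun x hx =>
    (Real.continuousAt_rpow_const x ρ₂ (Or.inl (ne_of_gt hx))).continuousWithinAt
  have hcont₃ : ContinuousOn (fun x : ℝ => δ * x^ρ₃) (Ioi 0) := fun x hx =>
    (continuousAt_const.mul
      (Real.continuousAt_rpow_const x ρ₃ (Or.inl (ne_of_gt hx)))).continuousWithinAt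
  -- monotonicity of rescaled primitives
  have hmonoF₁ : ∀ᶠ r in atTop, MonotoneOn
      (fun x => ∫ s in Ioc (0:ℝ) x, b₁ r ^ 2 * H (b₁ r * b₂ r * s / r) 0 0) (Ioi 0) := by
    filter_upwards [eventually_ge_atTop (1:ℝ)] with r hr
    intro u hu v hv huv
    have hT := hthatpos r (by linarith)
    simp only
    rw [Feq₁ r hr u, Feq₁ r hr v]
    exact (div_le_div_iff_of_pos_right (hm₁pos _ hT)).mpr
      (hm₁mono _ _ (mul_pos hT hu) (mul_le_mul_of_nonneg_left huv hT.le))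
  have hmonoF₂ : ∀ᶠ r in atTop, MonotoneOn
      (fun x => ∫ s in Ioc (0:ℝ) x, b₂ r ^ 2 * H (b₁ r * b₂ r * s / r) 1 1) (Ioi 0) := by
    filter_upwards [eventually_ge_atTop (1:ℝ)] with r hr
    intro u hu v hv huv
    have hT := hthatpos r (by linarith)
    simp only
    rw [Feq₂ r hr u, Feq₂ r hr v]
    exact (div_le_div_iff_of_pos_right (hm₂pos _ hT)).mpr
      (hm₂mono _ _ (mul_pos hT hu) (mul_le_mul_of_nonneg_left huv hT.le))
  -- pointwise convergence of rescaled primitives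
  have hptF₁ : ∀ x ∈ Ioi (0:ℝ), Tendsto
      (fun r => ∫ s in Ioc (0:ℝ) x, b₁ r ^ 2 * H (b₁ r * b₂ r * s / r) 0 0) atTop
      (𝓝 (x^ρ₁)) := by
    intro x hx
    refine (lim₁ x hx).congr' ?_
    filter_upwards [eventually_ge_atTop (1:ℝ)] with r hr
    exact (Feq₁ r hr x).symm
  have hptF₂ : ∀ x ∈ Ioi (0:ℝ), Tendsto
      (fun r => ∫ s in Ioc (0:ℝ) x, b₂ r ^ 2 * H (b₁ r * b₂ r * s / r) 1 1) atTop
      (𝓝 (x^ρ₂)) := by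
    intro x hx
    refine (lim₂ x hx).congr' ?_
    filter_upwards [eventually_ge_atTop (1:ℝ)] with r hr
    exact (Feq₂ r hr x).symm
  have hptF₃ : ∀ x ∈ Ioi (0:ℝ), Tendsto
      (fun r => ∫ s in Ioc (0:ℝ) x, b₁ r * b₂ r * H (b₁ r * b₂ r * s / r) 0 1) atTop
      (𝓝 (δ * x^ρ₃)) := by
    intro x hx
    refine (lim₃ x hx).congr' ?_
    filter_upwards [eventually_ge_atTop (1:ℝ)] with r hr
    exact (Feq₃ r hr x).symm
  -- trivial Cauchy-Schwarz hypothesis for the diagonal entries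
  have hCSself₁ : ∀ᶠ r in atTop, ∀ a b : ℝ, 0 < a → a ≤ b →
      |(fun x => ∫ s in Ioc (0:ℝ) x, b₁ r ^ 2 * H (b₁ r * b₂ r * s / r) 0 0) b -
        (fun x => ∫ s in Ioc (0:ℝ) x, b₁ r ^ 2 * H (b₁ r * b₂ r * s / r) 0 0) a| ≤
      Real.sqrt (((fun x => ∫ s in Ioc (0:ℝ) x, b₁ r ^ 2 * H (b₁ r * b₂ r * s / r) 0 0) b -
          (fun x => ∫ s in Ioc (0:ℝ) x, b₁ r ^ 2 * H (b₁ r * b₂ r * s / r) 0 0) a) *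
        ((fun x => ∫ s in Ioc (0:ℝ) x, b₁ r ^ 2 * H (b₁ r * b₂ r * s / r) 0 0) b -
          (fun x => ∫ s in Ioc (0:ℝ) x, b₁ r ^ 2 * H (b₁ r * b₂ r * s / r) 0 0) a)) := by
    refine Eventually.of_forall fun r a b _ _ => ?_
    exact le_of_eq (Real.sqrt_mul_self_eq_abs _).symm
  have hCSself₂ : ∀ᶠ r in atTop, ∀ a b : ℝ, 0 < a → a ≤ b →
      |(fun x => ∫ s in Ioc (0:ℝ) x, b₂ r ^ 2 * H (b₁ r * b₂ r * s / r) 1 1) b -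
        (fun x => ∫ s in Ioc (0:ℝ) x, b₂ r ^ 2 * H (b₁ r * b₂ r * s / r) 1 1) a| ≤
      Real.sqrt (((fun x => ∫ s in Ioc (0:ℝ) x, b₂ r ^ 2 * H (b₁ r * b₂ r * s / r) 1 1) b -
          (fun x => ∫ s in Ioc (0:ℝ) x, b₂ r ^ 2 * H (b₁ r * b₂ r * s / r) 1 1) a) *
        ((fun x => ∫ s in Ioc (0:ℝ) x, b₂ r ^ 2 * H (b₁ r * b₂ r * s / r) 1 1) b -
          (fun x => ∫ s in Ioc (0:ℝ) x, b₂ r ^ 2 * H (b₁ r * b₂ r * s / r) 1 1) a)) := by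
    refine Eventually.of_forall fun r a b _ _ => ?_
    exact le_of_eq (Real.sqrt_mul_self_eq_abs _).symm
  -- Cauchy-Schwarz hypothesis for the off-diagonal entry
  have hCSF₃ : ∀ᶠ r in atTop, ∀ a b : ℝ, 0 < a → a ≤ b →
      |(fun x => ∫ s in Ioc (0:ℝ) x, b₁ r * b₂ r * H (b₁ r * b₂ r * s / r) 0 1) b -
        (fun x => ∫ s in Ioc (0:ℝ) x, b₁ r * b₂ r * H (b₁ r * b₂ r * s / r) 0 1) a| ≤
      Real.sqrt (((fun x => ∫ s in Ioc (0:ℝ) x, b₁ r ^ 2 * H (b₁ r * b₂ r * s / r) 0 0) b -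
          (fun x => ∫ s in Ioc (0:ℝ) x, b₁ r ^ 2 * H (b₁ r * b₂ r * s / r) 0 0) a) *
        ((fun x => ∫ s in Ioc (0:ℝ) x, b₂ r ^ 2 * H (b₁ r * b₂ r * s / r) 1 1) b -
          (fun x => ∫ s in Ioc (0:ℝ) x, b₂ r ^ 2 * H (b₁ r * b₂ r * s / r) 1 1) a)) := by
    filter_upwards [eventually_ge_atTop (1:ℝ)] with r hr a b ha hab
    have hr0 : (0:ℝ) < r := by linarith
    have hT : 0 < that r := hthatpos r hr0
    have c1 : 0 < m₁ (that r) := hm₁pos _ hT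
    have c2 : 0 < m₂ (that r) := hm₂pos _ hT
    have hD : 0 < Real.sqrt (m₁ (that r) * m₂ (that r)) := Real.sqrt_pos.mpr (by positivity)
    have hTa : 0 < that r * a := mul_pos hT ha
    have hTab : that r * a ≤ that r * b := mul_le_mul_of_nonneg_left hab hT.le
    rw [Feq₃ r hr a, Feq₃ r hr b, Feq₁ r hr a, Feq₁ r hr b, Feq₂ r hr a, Feq₂ r hr b]
    rw [div_sub_div_same, abs_div, abs_of_pos hD, div_sub_div_same, div_sub_div_same,
      div_mul_div_comm]
    have hΔ₁ : 0 ≤ m₁ (that r * b) - m₁ (that r * a) :=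
      sub_nonneg.mpr (hm₁mono _ _ hTa hTab)
    have hΔ₂ : 0 ≤ m₂ (that r * b) - m₂ (that r * a) :=
      sub_nonneg.mpr (hm₂mono _ _ hTa hTab)
    rw [Real.sqrt_div (mul_nonneg hΔ₁ hΔ₂)]
    exact (div_le_div_iff_of_pos_right hD).mpr (hCSabs _ _ hTa hTab)
  -- entry computation of Htilde
  have hent00 : ∀ s : ℝ, Htilde s 0 0 = ρ₁ * s^(ρ₁-1) := fun s => by rw [hHtilde]; simp
  have hent11 : ∀ s : ℝ, Htilde s 1 1 = ρ₂ * s^(ρ₂-1) := fun s => by rw [hHtilde]; simp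
  have hent01 : ∀ s : ℝ, Htilde s 0 1 = δ * ρ₃ * s^(ρ₃-1) := fun s => by rw [hHtilde]; simp
  refine ⟨?_, ⟨?_, ?_, ?_⟩, fun x hx => ⟨lim₁ x hx, lim₂ x hx, lim₃ x hx⟩⟩
  · -- positive semidefiniteness
    apply ae_of_all
    intro t ht
    rw [hHtilde]
    have hX₁ : (0:ℝ) ≤ t^(ρ₁-1) := Real.rpow_nonneg ht.le _
    have hX₂ : (0:ℝ) ≤ t^(ρ₂-1) := Real.rpow_nonneg ht.le _
    apply psd_fin_two (mul_nonneg hρ₁.le hX₁) (mul_nonneg hρ₂.le hX₂)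
    have ht3 : (t^(ρ₃-1))^2 = t^(ρ₁-1) * t^(ρ₂-1) := by
      rw [sq, ← Real.rpow_add ht, ← Real.rpow_add ht]
      congr 1
      rw [hρ₃]; ring
    calc (δ * ρ₃ * t^(ρ₃-1))^2 = (δ^2 * ρ₃^2) * (t^(ρ₃-1))^2 := by ring
      _ = (δ^2 * ρ₃^2) * (t^(ρ₁-1) * t^(ρ₂-1)) := by rw [ht3]
      _ ≤ (ρ₁ * ρ₂) * (t^(ρ₁-1) * t^(ρ₂-1)) :=
          mul_le_mul_of_nonneg_right hδb (mul_nonneg hX₁ hX₂)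
      _ = ρ₁ * t^(ρ₁-1) * (ρ₂ * t^(ρ₂-1)) := by ring
  · -- TLU for entry (0,0)
    have T1 := polya_CS _ _ _ _ _ _ hmonoF₁ hmonoF₁ hCSself₁ hcont₁ hcont₁ hcont₁
      hptF₁ hptF₁ hptF₁
    refine T1.congr_right fun x hx => ?_
    simp only [hent00]
    exact (ioc_rpow ρ₁ hρ₁ x hx).symm
  · -- TLU for entry (1,1)
    have T2 := polya_CS _ _ _ _ _ _ hmonoF₂ hmonoF₂ hCSself₂ hcont₂ hcont₂ hcont₂
      hptF₂ hptF₂ hptF₂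
    refine T2.congr_right fun x hx => ?_
    simp only [hent11]
    exact (ioc_rpow ρ₂ hρ₂ x hx).symm
  · -- TLU for entry (0,1)
    have T3 := polya_CS _ _ _ _ _ _ hmonoF₁ hmonoF₂ hCSF₃ hcont₁ hcont₂ hcont₃
      hptF₁ hptF₂ hptF₃
    refine T3.congr_right fun x hx => ?_
    simp only [hent01]
    have : ∀ s : ℝ, δ * ρ₃ * s^(ρ₃-1) = δ * (ρ₃ * s^(ρ₃-1)) := fun s => by ring
    simp only [this]
    rw [integral_const_mul, ioc_rpow ρ₃ hρ₃pos x hx]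
end
end
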